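/- Let n ≥ 1, N ≥ 2, let Q_1, …, Q_N ⊆ ℝ^n be convex sets, let g_i : ℝ^n → ℝ, and let v* ∈ ∩_{i=1}^N Q_i. For x = (x_1, …, x_N) ∈ (ℝ^n)^N suppose u_i(x_i) ∈ Q_i attains the supremum f_i(x_i) := sup{⟨x_i, u⟩ − g_i(u) : u ∈ Q_i} (assumed finite), and set f(x) = Σ_{i=1}^N f_i(x_i) and v̂* = (v*, …, v*) ∈ (ℝ^n)^N. Let G be an N×N symmetric positive semidefinite matrix with G e = 0 such that uᵀGu = 0 implies u is a scalar multiple of e. Assume f is convex and differentiable with block gradient ∇_{x_i} f(x) = u_i(x_i) for all x, and let x* ∈ S_n be a minimizer of f over S_n with u_i(x_i*) = v* for every i. Then for every x ∈ S_n: −‖x*‖*_G · ‖u(x) − v̂*‖_G ≤ Σ_{i=1}^N g_i(u_i(x_i)) − Σ_{i=1}^N g_i(v*) ≤ ( ‖x − x*‖*_G + ‖x*‖*_G ) · ‖u(x) − v̂*‖_G, where u(x) = (u_1(x_1), …, u_N(x_N)). -/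

import Mathlib

open RealInnerProductSpace

/-- The seminorm `‖w‖_G = √(∑_{i,j} G_{ij} ⟨w_i, w_j⟩)` on block vectors. -/
noncomputable def blockNormG (n N : ℕ) (G : Matrix (Fin N) (Fin N) ℝ)
    (w : Fin N → EuclideanSpace ℝ (Fin n)) : ℝ :=
  Real.sqrt (∑ i, ∑ j, G i j * ⟪w i, w j⟫)

/-- The dual norm `‖x‖*_G = sup{∑_i ⟨x_i, w_i⟩ : ‖w‖_G ≤ 1}` on block
vectors with zero block sum. -/
noncomputable def blockDualNormG (n N : ℕ) (G : Matrix (Fin N) (Fin N) ℝ)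
    (x : Fin N → EuclideanSpace ℝ (Fin n)) : ℝ :=
  sSup {r : ℝ | ∃ w : Fin N → EuclideanSpace ℝ (Fin n),
    blockNormG n N G w ≤ 1 ∧ r = ∑ i, ⟪x i, w i⟫}

section Aux

/-- Gradient inequality for convex differentiable functions. -/
lemma grad_ineq {W : Type*} [NormedAddCommGroup W] [NormedSpace ℝ W]
    {F : W → ℝ} (hconv : ConvexOn ℝ Set.univ F) (hdiff : Differentiable ℝ F)
    (a b : W) : F a + fderiv ℝ F a (b - a) ≤ F b := by
  set φ : ℝ → ℝ := fun t => F (a + t • (b - a)) with hφ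
  have hc : ∀ t : ℝ, HasDerivAt (fun t : ℝ => a + t • (b - a)) (b - a) t := by
    intro t
    simpa using ((hasDerivAt_id t).smul_const (b - a)).const_add a
  have hφd : HasDerivAt φ (fderiv ℝ F a (b - a)) 0 := by
    have := (hdiff (a + (0:ℝ) • (b - a))).hasFDerivAt.comp_hasDerivAt 0 (hc 0)
    simp at this ⊢
    exact this
  have hφconv : ConvexOn ℝ Set.univ φ := by
    have := hconv.comp_affineMap (AffineMap.lineMap a b)
    have heq : ∀ t : ℝ, φ t = (F ∘ (AffineMap.lineMap a b)) t := by
      intro t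
      simp only [φ, Function.comp_apply, AffineMap.lineMap_apply, vsub_eq_sub, vadd_eq_add]
      congr 1
      abel
    rw [funext heq]
    simpa using this
  have h01 : (0:ℝ) < 1 := one_pos
  have := hφconv.le_slope_of_hasDerivAt (Set.mem_univ 0) (Set.mem_univ 1) h01 hφd
  rw [slope_def_field] at this
  simp [φ] at this
  have h2 : (fderiv ℝ F a) (b - a) = (fderiv ℝ F a) b - (fderiv ℝ F a) a := map_sub _ _ _
  linarith [this]

variable {n N : ℕ}

lemma psd_quad {G : Matrix (Fin N) (Fin N) ℝ} (hpsd : G.PosSemidef) (c : Fin N → ℝ) :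
    0 ≤ ∑ i, ∑ j, G i j * (c i * c j) := by
  have h := hpsd.dotProduct_mulVec_nonneg c
  rw [dotProduct] at h
  refine le_trans h (le_of_eq ?_)
  simp only [Matrix.mulVec, dotProduct, star_trivial, Finset.mul_sum]
  exact Finset.sum_congr rfl fun i _ => Finset.sum_congr rfl fun j _ => by ring

lemma qf_coord (G : Matrix (Fin N) (Fin N) ℝ) (w : Fin N → EuclideanSpace ℝ (Fin n)) :
    ∑ i, ∑ j, G i j * ⟪w i, w j⟫ =
      ∑ k, ∑ i, ∑ j, G i j * (w i k * w j k) := by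
  have hinner : ∀ i j : Fin N, G i j * ⟪w i, w j⟫ = ∑ k, G i j * (w i k * w j k) := by
    intro i j
    rw [PiLp.inner_apply, Finset.mul_sum]
    simp
    exact Finset.sum_congr rfl fun k _ => by ring
  simp_rw [hinner]
  have h1 : ∀ i : Fin N, ∑ j, ∑ k, G i j * (w i k * w j k)
      = ∑ k, ∑ j, G i j * (w i k * w j k) := fun i => Finset.sum_comm
  simp_rw [h1]
  exact Finset.sum_comm

lemma qf_nonneg {G : Matrix (Fin N) (Fin N) ℝ} (hpsd : G.PosSemidef)
    (w : Fin N → EuclideanSpace ℝ (Fin n)) :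
    0 ≤ ∑ i, ∑ j, G i j * ⟪w i, w j⟫ := by
  rw [qf_coord]
  exact Finset.sum_nonneg fun k _ => psd_quad hpsd _

lemma qf_zero_const {G : Matrix (Fin N) (Fin N) ℝ} (hpsd : G.PosSemidef)
    (hker : ∀ c : Fin N → ℝ, (∑ i, ∑ j, c i * G i j * c j) = 0 →
      ∃ a : ℝ, c = fun _ => a)
    (w : Fin N → EuclideanSpace ℝ (Fin n)) (hw : ∑ i, ∑ j, G i j * ⟪w i, w j⟫ = 0) :
    ∃ v : EuclideanSpace ℝ (Fin n), ∀ i, w i = v := by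
  rw [qf_coord] at hw
  have hk : ∀ k, ∑ i, ∑ j, G i j * (w i k * w j k) = 0 := by
    have := (Finset.sum_eq_zero_iff_of_nonneg
      (fun k _ => psd_quad hpsd (fun i => w i k))).mp hw
    exact fun k => this k (Finset.mem_univ k)
  have hconst : ∀ k, ∃ a : ℝ, (fun i => w i k) = fun _ => a := by
    intro k
    refine hker _ ?_
    rw [← hk k]
    exact Finset.sum_congr rfl fun i _ => Finset.sum_congr rfl fun j _ => by ring
  by_cases hNpos : Nonempty (Fin N)
  · obtain ⟨i0⟩ := hNpos
    refine ⟨w i0, fun i => ?_⟩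
    ext k
    obtain ⟨a, ha⟩ := hconst k
    have h1 := congrFun ha i
    have h2 := congrFun ha i0
    simp only at h1 h2
    rw [h1, h2]
  · exact ⟨0, fun i => absurd ⟨i⟩ hNpos⟩

lemma qf_smul (G : Matrix (Fin N) (Fin N) ℝ) (c : ℝ) (w : Fin N → EuclideanSpace ℝ (Fin n)) :
    ∑ i, ∑ j, G i j * ⟪(c • w) i, (c • w) j⟫ =
      c ^ 2 * ∑ i, ∑ j, G i j * ⟪w i, w j⟫ := by
  rw [Finset.mul_sum]
  refine Finset.sum_congr rfl fun i _ => ?_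
  rw [Finset.mul_sum]
  refine Finset.sum_congr rfl fun j _ => ?_
  simp only [Pi.smul_apply, real_inner_smul_left, real_inner_smul_right]
  ring

lemma qf_pos_min (hn : 1 ≤ n) (hN : 2 ≤ N) {G : Matrix (Fin N) (Fin N) ℝ}
    (hpsd : G.PosSemidef)
    (hker : ∀ c : Fin N → ℝ, (∑ i, ∑ j, c i * G i j * c j) = 0 →
      ∃ a : ℝ, c = fun _ => a) :
    ∃ m : ℝ, 0 < m ∧ ∀ w : Fin N → EuclideanSpace ℝ (Fin n), (∑ i, w i = 0) →
      m * ‖w‖ ^ 2 ≤ ∑ i, ∑ j, G i j * ⟪w i, w j⟫ := by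
  set Qf : (Fin N → EuclideanSpace ℝ (Fin n)) → ℝ :=
    fun w => ∑ i, ∑ j, G i j * ⟪w i, w j⟫ with hQf
  have hQcont : Continuous Qf := by
    refine continuous_finset_sum _ fun i _ => continuous_finset_sum _ fun j _ => ?_
    exact continuous_const.mul ((continuous_apply i).inner (continuous_apply j))
  have hSclosed : IsClosed {w : Fin N → EuclideanSpace ℝ (Fin n) | ∑ i, w i = 0} :=
    isClosed_eq (continuous_finset_sum _ fun i _ => continuous_apply i) continuous_const
  set K : Set (Fin N → EuclideanSpace ℝ (Fin n)) :=
    Metric.sphere (0 : Fin N → EuclideanSpace ℝ (Fin n)) 1 ∩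
      {w : Fin N → EuclideanSpace ℝ (Fin n) | ∑ i, w i = 0} with hK
  have hKcomp : IsCompact K :=
    (isCompact_sphere (0 : Fin N → EuclideanSpace ℝ (Fin n)) 1).inter_right hSclosed
  have hN0 : 0 < N := by omega
  have hN1 : 1 < N := by omega
  set i0 : Fin N := ⟨0, hN0⟩
  set i1 : Fin N := ⟨1, hN1⟩
  have hi01 : i0 ≠ i1 := by simp [i0, i1, Fin.ext_iff]
  set e0 : EuclideanSpace ℝ (Fin n) := EuclideanSpace.single ⟨0, hn⟩ 1 with he0
  have he0ne : e0 ≠ 0 := by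
    intro h
    have := congrArg (fun v : EuclideanSpace ℝ (Fin n) => v ⟨0, hn⟩) h
    simp [e0, EuclideanSpace.single_apply] at this
  set c : Fin N → ℝ := fun i => if i = i0 then 1 else if i = i1 then -1 else 0 with hc
  set w0 : Fin N → EuclideanSpace ℝ (Fin n) := fun i => c i • e0 with hw0
  have hw0sum : ∑ i, w0 i = 0 := by
    rw [hw0, ← Finset.sum_smul]
    have hcs : ∑ i, c i = 0 := by
      have hsplit : ∀ i : Fin N, c i =
          (if i = i0 then (1:ℝ) else 0) + (if i = i1 then (-1:ℝ) else 0) := by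
        intro i
        by_cases h : i = i0
        · subst h; simp [hc, hi01]
        · simp [hc, h]
      simp_rw [hsplit]
      rw [Finset.sum_add_distrib]
      simp [Finset.sum_ite_eq']
    rw [hcs, zero_smul]
  have hw0ne : w0 ≠ 0 := by
    intro h
    have := congrFun h i0
    simp [hw0, hc] at this
    exact he0ne this
  set w1 : Fin N → EuclideanSpace ℝ (Fin n) := ‖w0‖⁻¹ • w0 with hw1
  have hw1K : w1 ∈ K := by
    constructor
    · rw [mem_sphere_zero_iff_norm]
      exact norm_smul_inv_norm hw0ne
    · show ∑ i, w1 i = 0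
      rw [hw1]
      simp only [Pi.smul_apply]
      rw [← Finset.smul_sum, hw0sum, smul_zero]
  obtain ⟨z, hzK, hzmin'⟩ := hKcomp.exists_isMinOn ⟨w1, hw1K⟩ hQcont.continuousOn
  have hzmin : ∀ y ∈ K, Qf z ≤ Qf y := fun y hy => hzmin' hy
  have hzne : z ≠ 0 := by
    intro h
    have := hzK.1
    rw [mem_sphere_zero_iff_norm, h, norm_zero] at this
    norm_num at this
  have hm_pos : 0 < Qf z := by
    rcases lt_or_eq_of_le (qf_nonneg hpsd z) with h | h
    · exact h
    · exfalso
      obtain ⟨v, hv⟩ := qf_zero_const hpsd hker z h.symm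
      have hzsum : ∑ i, z i = 0 := hzK.2
      have : ∑ i, z i = (N : ℝ) • v := by
        rw [Finset.sum_congr rfl fun i _ => hv i]
        simp [Finset.sum_const, ← Nat.cast_smul_eq_nsmul ℝ]
      rw [this] at hzsum
      have hv0 : v = 0 := by
        rcases smul_eq_zero.mp hzsum with h' | h'
        · exact absurd h' (by positivity)
        · exact h'
      exact hzne (funext fun i => by rw [hv i, hv0]; rfl)
  refine ⟨Qf z, hm_pos, fun w hwsum => ?_⟩
  by_cases hw : w = 0
  · subst hw
    simp [Qf]
  · have hnw : (0:ℝ) < ‖w‖ := norm_pos_iff.mpr hw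
    set w' : Fin N → EuclideanSpace ℝ (Fin n) := ‖w‖⁻¹ • w with hw'
    have hw'K : w' ∈ K := by
      constructor
      · rw [mem_sphere_zero_iff_norm]
        exact norm_smul_inv_norm hw
      · show ∑ i, w' i = 0
        rw [hw']
        simp only [Pi.smul_apply]
        rw [← Finset.smul_sum, hwsum, smul_zero]
    have h1 : Qf z ≤ Qf w' := hzmin w' hw'K
    have h2 : Qf w' = (‖w‖⁻¹) ^ 2 * Qf w := qf_smul G _ w
    rw [h2] at h1
    have : Qf z * ‖w‖ ^ 2 ≤ (‖w‖⁻¹) ^ 2 * Qf w * ‖w‖ ^ 2 :=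
      mul_le_mul_of_nonneg_right h1 (by positivity)
    calc Qf z * ‖w‖ ^ 2 ≤ (‖w‖⁻¹) ^ 2 * Qf w * ‖w‖ ^ 2 := this
      _ = Qf w := by field_simp

lemma qf_shift {G : Matrix (Fin N) (Fin N) ℝ} (hsym : G.IsSymm)
    (hGe : G.mulVec (fun _ => (1 : ℝ)) = 0) (w : Fin N → EuclideanSpace ℝ (Fin n))
    (s : EuclideanSpace ℝ (Fin n)) :
    ∑ i, ∑ j, G i j * ⟪w i - s, w j - s⟫ = ∑ i, ∑ j, G i j * ⟪w i, w j⟫ := by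
  have hrow : ∀ i, ∑ j, G i j = 0 := by
    intro i
    have := congrFun hGe i
    simpa [Matrix.mulVec, dotProduct] using this
  have hcol : ∀ j, ∑ i, G i j = 0 := by
    intro j
    rw [Finset.sum_congr rfl fun i _ => hsym.apply j i]
    exact hrow j
  have hB : ∑ i, ∑ j, G i j * ⟪w i, s⟫ = 0 :=
    Finset.sum_eq_zero fun i _ => by rw [← Finset.sum_mul, hrow i, zero_mul]
  have hD : ∑ i, ∑ j, G i j * ⟪s, s⟫ = 0 :=
    Finset.sum_eq_zero fun i _ => by rw [← Finset.sum_mul, hrow i, zero_mul]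
  have hC : ∑ i, ∑ j, G i j * ⟪s, w j⟫ = 0 := by
    rw [Finset.sum_comm]
    exact Finset.sum_eq_zero fun j _ => by rw [← Finset.sum_mul, hcol j, zero_mul]
  calc ∑ i, ∑ j, G i j * ⟪w i - s, w j - s⟫
      = ∑ i, ∑ j, (G i j * ⟪w i, w j⟫ - G i j * ⟪w i, s⟫
          - G i j * ⟪s, w j⟫ + G i j * ⟪s, s⟫) := by
        refine Finset.sum_congr rfl fun i _ => Finset.sum_congr rfl fun j _ => ?_
        rw [inner_sub_left, inner_sub_right, inner_sub_right]
        ring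
    _ = (∑ i, ∑ j, G i j * ⟪w i, w j⟫) - (∑ i, ∑ j, G i j * ⟪w i, s⟫)
          - (∑ i, ∑ j, G i j * ⟪s, w j⟫) + (∑ i, ∑ j, G i j * ⟪s, s⟫) := by
        simp [Finset.sum_add_distrib, Finset.sum_sub_distrib]
    _ = ∑ i, ∑ j, G i j * ⟪w i, w j⟫ := by rw [hB, hC, hD]; ring

lemma dual_bdd (hn : 1 ≤ n) (hN : 2 ≤ N) {G : Matrix (Fin N) (Fin N) ℝ}
    (hsym : G.IsSymm) (hpsd : G.PosSemidef)
    (hGe : G.mulVec (fun _ => (1 : ℝ)) = 0)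
    (hker : ∀ c : Fin N → ℝ, (∑ i, ∑ j, c i * G i j * c j) = 0 →
      ∃ a : ℝ, c = fun _ => a)
    (y : Fin N → EuclideanSpace ℝ (Fin n)) (hy : ∑ i, y i = 0) :
    BddAbove {r : ℝ | ∃ w : Fin N → EuclideanSpace ℝ (Fin n),
      blockNormG n N G w ≤ 1 ∧ r = ∑ i, ⟪y i, w i⟫} := by
  obtain ⟨m, hm, hmle⟩ := qf_pos_min hn hN hpsd hker
  refine ⟨(∑ i, ‖y i‖) * Real.sqrt m⁻¹, ?_⟩
  rintro r ⟨w, hw1, rfl⟩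
  set s : EuclideanSpace ℝ (Fin n) := (N : ℝ)⁻¹ • ∑ j, w j with hs
  set wb : Fin N → EuclideanSpace ℝ (Fin n) := fun i => w i - s with hwb
  have hNne : (N : ℝ) ≠ 0 := by positivity
  have hsum : ∑ i, wb i = 0 := by
    rw [hwb]
    rw [Finset.sum_sub_distrib, Finset.sum_const, Finset.card_univ, Fintype.card_fin,
      ← Nat.cast_smul_eq_nsmul ℝ, smul_smul, mul_inv_cancel₀ hNne, one_smul, sub_self]
  have hQw : ∑ i, ∑ j, G i j * ⟪w i, w j⟫ ≤ 1 := by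
    rw [blockNormG] at hw1
    have h0 := qf_nonneg hpsd w
    have := Real.sqrt_nonneg (∑ i, ∑ j, G i j * ⟪w i, w j⟫)
    nlinarith [Real.sq_sqrt h0, hw1]
  have hQb : ∑ i, ∑ j, G i j * ⟪wb i, wb j⟫ ≤ 1 := by
    rw [hwb]
    rw [qf_shift hsym hGe w s]
    exact hQw
  have hnormb : ‖wb‖ ≤ Real.sqrt m⁻¹ := by
    have h1 := hmle wb hsum
    rw [Real.le_sqrt (norm_nonneg _)] <;> try positivity
    rw [← mul_le_mul_iff_right₀ hm]
    calc m * ‖wb‖ ^ 2 ≤ ∑ i, ∑ j, G i j * ⟪wb i, wb j⟫ := h1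
      _ ≤ 1 := hQb
      _ = m * m⁻¹ := by field_simp
  have hsplit : ∑ i, ⟪y i, w i⟫ = ∑ i, ⟪y i, wb i⟫ := by
    have : ∀ i, ⟪y i, w i⟫ = ⟪y i, wb i⟫ + ⟪y i, s⟫ := by
      intro i
      rw [hwb]
      simp only
      rw [← inner_add_right, sub_add_cancel]
    simp_rw [this]
    rw [Finset.sum_add_distrib, ← sum_inner, hy]
    simp
  rw [hsplit]
  calc ∑ i, ⟪y i, wb i⟫ ≤ ∑ i, ‖y i‖ * Real.sqrt m⁻¹ := by
        refine Finset.sum_le_sum fun i _ => ?_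
        calc ⟪y i, wb i⟫ ≤ ‖y i‖ * ‖wb i‖ := real_inner_le_norm _ _
          _ ≤ ‖y i‖ * Real.sqrt m⁻¹ :=
            mul_le_mul_of_nonneg_left ((norm_le_pi_norm wb i).trans hnormb) (norm_nonneg _)
    _ = (∑ i, ‖y i‖) * Real.sqrt m⁻¹ := by rw [Finset.sum_mul]

lemma cs_ineq (hn : 1 ≤ n) (hN : 2 ≤ N) {G : Matrix (Fin N) (Fin N) ℝ}
    (hsym : G.IsSymm) (hpsd : G.PosSemidef)
    (hGe : G.mulVec (fun _ => (1 : ℝ)) = 0)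
    (hker : ∀ c : Fin N → ℝ, (∑ i, ∑ j, c i * G i j * c j) = 0 →
      ∃ a : ℝ, c = fun _ => a)
    (y : Fin N → EuclideanSpace ℝ (Fin n)) (hy : ∑ i, y i = 0)
    (w : Fin N → EuclideanSpace ℝ (Fin n)) :
    ∑ i, ⟪y i, w i⟫ ≤ blockDualNormG n N G y * blockNormG n N G w := by
  set b := blockNormG n N G w with hb
  have hbnn : 0 ≤ b := Real.sqrt_nonneg _
  rcases eq_or_lt_of_le hbnn with hb0 | hbpos
  · have hQ0 : ∑ i, ∑ j, G i j * ⟪w i, w j⟫ = 0 :=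
      (Real.sqrt_eq_zero (qf_nonneg hpsd w)).mp hb0.symm
    obtain ⟨v, hv⟩ := qf_zero_const hpsd hker w hQ0
    have : ∑ i, ⟪y i, w i⟫ = 0 := by
      rw [Finset.sum_congr rfl fun i _ => by rw [hv i]]
      rw [← sum_inner, hy, inner_zero_left]
    rw [this, ← hb0, mul_zero]
  · set w' : Fin N → EuclideanSpace ℝ (Fin n) := b⁻¹ • w with hw'
    have hQw' : blockNormG n N G w' ≤ 1 := by
      rw [blockNormG, hw', qf_smul G b⁻¹ w]
      rw [Real.sqrt_mul (by positivity), Real.sqrt_sq_eq_abs, abs_of_pos (by positivity)]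
      rw [blockNormG] at hb
      rw [← hb, inv_mul_cancel₀ (ne_of_gt hbpos)]
    have hmem : (∑ i, ⟪y i, w' i⟫) ∈ {r : ℝ | ∃ w : Fin N → EuclideanSpace ℝ (Fin n),
        blockNormG n N G w ≤ 1 ∧ r = ∑ i, ⟪y i, w i⟫} := ⟨w', hQw', rfl⟩
    have hle := le_csSup (dual_bdd hn hN hsym hpsd hGe hker y hy) hmem
    have heq : ∑ i, ⟪y i, w' i⟫ = b⁻¹ * ∑ i, ⟪y i, w i⟫ := by
      rw [Finset.mul_sum]
      refine Finset.sum_congr rfl fun i _ => ?_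
      rw [hw']
      simp only [Pi.smul_apply]
      rw [real_inner_smul_right]
    rw [heq] at hle
    have := mul_le_mul_of_nonneg_left hle (le_of_lt hbpos)
    calc ∑ i, ⟪y i, w i⟫ = b * (b⁻¹ * ∑ i, ⟪y i, w i⟫) := by
          field_simp
      _ ≤ b * blockDualNormG n N G y := this
      _ = blockDualNormG n N G y * b := mul_comm _ _

end Aux

/-- Two-sided bound on the primal suboptimality
`∑_i g_i(u_i(x_i)) − ∑_i g_i(v*)` in terms of the norms `‖·‖_G`, `‖·‖*_G`. -/
theorem stmt_19 (n N : ℕ) (hn : 1 ≤ n) (hN : 2 ≤ N)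
    (Q : Fin N → Set (EuclideanSpace ℝ (Fin n))) (hQ : ∀ i, Convex ℝ (Q i))
    (g : Fin N → EuclideanSpace ℝ (Fin n) → ℝ)
    (vstar : EuclideanSpace ℝ (Fin n)) (hv : ∀ i, vstar ∈ Q i)
    (u : Fin N → EuclideanSpace ℝ (Fin n) → EuclideanSpace ℝ (Fin n))
    (fblk : Fin N → EuclideanSpace ℝ (Fin n) → ℝ)
    (hattain : ∀ i, ∀ y : EuclideanSpace ℝ (Fin n),
      u i y ∈ Q i ∧ fblk i y = ⟪y, u i y⟫ - g i (u i y) ∧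
        ∀ w ∈ Q i, ⟪y, w⟫ - g i w ≤ fblk i y)
    (F : (Fin N → EuclideanSpace ℝ (Fin n)) → ℝ)
    (hF : ∀ x : Fin N → EuclideanSpace ℝ (Fin n), F x = ∑ i, fblk i (x i))
    (G : Matrix (Fin N) (Fin N) ℝ)
    (hsym : G.IsSymm) (hpsd : G.PosSemidef)
    (hGe : G.mulVec (fun _ => (1 : ℝ)) = 0)
    (hker : ∀ c : Fin N → ℝ, (∑ i, ∑ j, c i * G i j * c j) = 0 →
      ∃ a : ℝ, c = fun _ => a)
    (hconv : ConvexOn ℝ Set.univ F) (hdiff : Differentiable ℝ F)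
    (hgrad : ∀ x : Fin N → EuclideanSpace ℝ (Fin n),
      ∀ v : Fin N → EuclideanSpace ℝ (Fin n),
        fderiv ℝ F x v = ∑ i, ⟪u i (x i), v i⟫)
    (xstar : Fin N → EuclideanSpace ℝ (Fin n)) (hxstarS : ∑ i, xstar i = 0)
    (hxstarmin : ∀ x : Fin N → EuclideanSpace ℝ (Fin n),
      (∑ i, x i = 0) → F xstar ≤ F x)
    (hxstaru : ∀ i, u i (xstar i) = vstar)
    (x : Fin N → EuclideanSpace ℝ (Fin n)) (hx : ∑ i, x i = 0) :
    (- blockDualNormG n N G xstar *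
        blockNormG n N G (fun i => u i (x i) - vstar) ≤
      (∑ i, g i (u i (x i))) - ∑ i, g i vstar) ∧
    ((∑ i, g i (u i (x i))) - ∑ i, g i vstar ≤
      (blockDualNormG n N G (x - xstar) + blockDualNormG n N G xstar) *
        blockNormG n N G (fun i => u i (x i) - vstar)) := by
  set d : Fin N → EuclideanSpace ℝ (Fin n) := fun i => u i (x i) - vstar with hd
  set A : ℝ := ∑ i, ⟪x i, d i⟫ with hA
  set B : ℝ := ∑ i, ⟪xstar i, d i⟫ with hB
  -- the gap identity
  have h1 : ∀ i, g i (u i (x i)) = ⟪x i, u i (x i)⟫ - fblk i (x i) := by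
    intro i
    have := (hattain i (x i)).2.1
    linarith
  have h2 : ∀ i, g i vstar = ⟪xstar i, vstar⟫ - fblk i (xstar i) := by
    intro i
    have := (hattain i (xstar i)).2.1
    rw [hxstaru i] at this
    linarith
  have h3 : ∑ i, ⟪xstar i, vstar⟫ = (0:ℝ) := by
    rw [← sum_inner, hxstarS, inner_zero_left]
  have h5 : ∑ i, ⟪x i, vstar⟫ = (0:ℝ) := by
    rw [← sum_inner, hx, inner_zero_left]
  have h4 : ∑ i, ⟪x i, u i (x i)⟫ = A + ∑ i, ⟪x i, vstar⟫ := by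
    rw [hA, ← Finset.sum_add_distrib]
    refine Finset.sum_congr rfl fun i _ => ?_
    rw [hd]
    simp only
    rw [← inner_add_right, sub_add_cancel]
  have hgap : (∑ i, g i (u i (x i))) - ∑ i, g i vstar = A - (F x - F xstar) := by
    rw [Finset.sum_congr rfl fun i _ => h1 i, Finset.sum_congr rfl fun i _ => h2 i]
    rw [Finset.sum_sub_distrib, Finset.sum_sub_distrib, ← hF x, ← hF xstar]
    rw [h4, h5, h3]
    ring
  -- convexity bounds on F x - F xstar
  have hFge : F xstar ≤ F x := hxstarmin x hx
  have hsubsum : ∑ i, (x i - xstar i) = 0 := by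
    rw [Finset.sum_sub_distrib, hx, hxstarS, sub_self]
  have hgradineq : F x + ∑ i, ⟪u i (x i), xstar i - x i⟫ ≤ F xstar := by
    have := grad_ineq hconv hdiff x xstar
    rw [hgrad x (xstar - x)] at this
    simpa [Pi.sub_apply] using this
  have hsum_uv : ∑ i, ⟪u i (x i), xstar i - x i⟫ = B - A := by
    have hterm : ∀ i, ⟪u i (x i), xstar i - x i⟫
        = (⟪xstar i, d i⟫ - ⟪x i, d i⟫) + ⟪vstar, xstar i - x i⟫ := by
      intro i
      have hu : u i (x i) = d i + vstar := by rw [hd]; simp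
      rw [hu, inner_add_left, inner_sub_right, inner_sub_right,
        real_inner_comm (d i) (xstar i), real_inner_comm (d i) (x i)]
      try ring
    rw [Finset.sum_congr rfl fun i _ => hterm i, Finset.sum_add_distrib,
      Finset.sum_sub_distrib]
    have : ∑ i, ⟪vstar, xstar i - x i⟫ = (0:ℝ) := by
      rw [← inner_sum]
      have : ∑ i, (xstar i - x i) = 0 := by
        rw [Finset.sum_sub_distrib, hx, hxstarS, sub_self]
      rw [this, inner_zero_right]
    rw [this, hA, hB]
    ring
  have hFle : F x - F xstar ≤ A - B := by linarith
  -- Cauchy-Schwarz applications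
  have hCS1 : A - B ≤ blockDualNormG n N G (x - xstar) * blockNormG n N G d := by
    have := cs_ineq hn hN hsym hpsd hGe hker (x - xstar)
      (by simp [Pi.sub_apply, Finset.sum_sub_distrib, hx, hxstarS]) d
    have heq : ∑ i, ⟪(x - xstar) i, d i⟫ = A - B := by
      rw [hA, hB, ← Finset.sum_sub_distrib]
      refine Finset.sum_congr rfl fun i _ => ?_
      rw [Pi.sub_apply, inner_sub_left]
    rwa [heq] at this
  have hCS2 : B ≤ blockDualNormG n N G xstar * blockNormG n N G d :=
    cs_ineq hn hN hsym hpsd hGe hker xstar hxstarS d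
  have hCS3 : -B ≤ blockDualNormG n N G xstar * blockNormG n N G d := by
    have hneg := cs_ineq hn hN hsym hpsd hGe hker xstar hxstarS (fun i => -(d i))
    have heq1 : ∑ i, ⟪xstar i, (fun i => -(d i)) i⟫ = -B := by
      rw [hB, ← Finset.sum_neg_distrib]
      exact Finset.sum_congr rfl fun i _ => by rw [inner_neg_right]
    have heq2 : blockNormG n N G (fun i => -(d i)) = blockNormG n N G d := by
      rw [blockNormG, blockNormG]
      congr 1
      exact Finset.sum_congr rfl fun i _ => Finset.sum_congr rfl fun j _ => by
        rw [inner_neg_neg]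
    rw [heq1, heq2] at hneg
    exact hneg
  constructor
  · -- lower bound
    rw [hgap, neg_mul]
    linarith
  · -- upper bound
    rw [hgap, add_mul]
    linarith
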